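/- Let k, ℓ, q be positive integers, set ℓ₁ = ℓ / gcd(ℓ,q), and define D(k,ℓ,q) = { M ∈ ℕ_{>0} : ℓ·gcd(k,M) divides qM }. Then D(k,ℓ,q) is exactly the set of positive multiples of the number 𝔪(k,ℓ,q) := ℓ₁ · max_{n ∈ ℕ} gcd(k, ℓ₁ⁿ); equivalently 𝔪(k,ℓ,q) = ℓ₁ · gcd(k, ℓ₁^u) for any sufficiently large u. -/

import Mathlib

/-- There is a point where `gcd k (l^u)` stops growing. -/
private lemma gcd_pow_exists_stab (k l : ℕ) (hk : 0 < k) :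
    ∃ u, Nat.gcd k (l ^ (u+1)) = Nat.gcd k (l ^ u) := by
  by_contra h
  push_neg at h
  have hmono : StrictMono (fun u => Nat.gcd k (l ^ u)) := by
    apply strictMono_nat_of_lt_succ
    intro n
    have h1 : Nat.gcd k (l ^ n) ∣ Nat.gcd k (l ^ (n+1)) :=
      Nat.dvd_gcd (Nat.gcd_dvd_left _ _)
        ((Nat.gcd_dvd_right _ _).trans (pow_dvd_pow l (Nat.le_succ n)))
    have h2 : 0 < Nat.gcd k (l ^ (n+1)) := Nat.gcd_pos_of_pos_left _ hk
    exact lt_of_le_of_ne (Nat.le_of_dvd h2 h1) (h n).symm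
  have h3 : k + 1 ≤ Nat.gcd k (l ^ (k+1)) := hmono.le_apply
  have hle : Nat.gcd k (l ^ (k+1)) ≤ k := Nat.le_of_dvd hk (Nat.gcd_dvd_left _ _)
  omega

/-- If the gcd has stabilized at step `u₀`, the cofactor `k / g` is coprime to `l`. -/
private lemma cofactor_coprime (k l u₀ : ℕ) (hk : 0 < k)
    (hstab : Nat.gcd k (l ^ (u₀+1)) = Nat.gcd k (l ^ u₀)) :
    Nat.Coprime (k / Nat.gcd k (l ^ u₀)) l := by
  set g := Nat.gcd k (l ^ u₀) with hg
  have hgpos : 0 < g := Nat.gcd_pos_of_pos_left _ hk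
  have hgk : g ∣ k := Nat.gcd_dvd_left _ _
  have hgl : g ∣ l ^ u₀ := Nat.gcd_dvd_right _ _
  set k' := k / g with hk'
  have hkk' : k = g * k' := (Nat.mul_div_cancel' hgk).symm
  set d := Nat.gcd k' l with hd
  -- d * g divides k and l^(u₀+1)
  have h1 : d * g ∣ k := by
    rw [hkk', mul_comm d g]
    exact mul_dvd_mul_left g (Nat.gcd_dvd_left _ _)
  have h2 : d * g ∣ l ^ (u₀+1) := by
    rw [pow_succ, mul_comm d g]
    exact mul_dvd_mul hgl (Nat.gcd_dvd_right _ _)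
  have h3 : d * g ∣ g := by
    have h3' : d * g ∣ Nat.gcd k (l ^ (u₀+1)) := Nat.dvd_gcd h1 h2
    rwa [hstab] at h3'
  have h4 : d * g ∣ 1 * g := by simpa using h3
  have h5 : d ∣ 1 := (Nat.mul_dvd_mul_iff_right hgpos).mp h4
  exact Nat.eq_one_of_dvd_one h5

/-- Once stabilized, the gcd is the same for all larger exponents. -/
private lemma gcd_pow_stable (k l u₀ : ℕ) (hk : 0 < k)
    (hstab : Nat.gcd k (l ^ (u₀+1)) = Nat.gcd k (l ^ u₀)) :
    ∀ u, u₀ ≤ u → Nat.gcd k (l ^ u) = Nat.gcd k (l ^ u₀) := by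
  intro u hu
  set g := Nat.gcd k (l ^ u₀) with hg
  have hgpos : 0 < g := Nat.gcd_pos_of_pos_left _ hk
  have hgk : g ∣ k := Nat.gcd_dvd_left _ _
  have hgl : g ∣ l ^ u := (Nat.gcd_dvd_right _ _).trans (pow_dvd_pow l hu)
  have hcop : Nat.Coprime (k / g) l := cofactor_coprime k l u₀ hk hstab
  set k' := k / g with hk'
  have hkk' : k = g * k' := (Nat.mul_div_cancel' hgk).symm
  apply Nat.dvd_antisymm
  · -- gcd k (l^u) ∣ g
    have : Nat.gcd (l ^ u) (g * k') ∣ Nat.gcd (l ^ u) g * Nat.gcd (l ^ u) k' :=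
      Nat.gcd_mul_right_dvd_mul_gcd _ _ _
    rw [Nat.gcd_eq_right hgl, (hcop.pow_right u).symm.gcd_eq_one, mul_one] at this
    rw [Nat.gcd_comm] at this
    rwa [← hkk'] at this
  · exact Nat.dvd_gcd hgk hgl

/-- Setting `ℓ₁ = ℓ / gcd(ℓ,q)`, the set `D(k,ℓ,q) = { M > 0 : ℓ·gcd(k,M) ∣ q·M }` is
exactly the set of positive multiples of `𝔪(k,ℓ,q) = ℓ₁ · gcd(k, ℓ₁^u)` for any
sufficiently large `u` (the value `gcd(k, ℓ₁^u)` stabilizes, achieving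
`max_{n} gcd(k, ℓ₁^n)`). -/
theorem D_eq_multiples_of_frakm (k ℓ q : ℕ) (hk : 0 < k) (hl : 0 < ℓ) (hq : 0 < q) :
    ∃ u₀ : ℕ,
      (∀ u, u₀ ≤ u →
        Nat.gcd k ((ℓ / Nat.gcd ℓ q) ^ u) = Nat.gcd k ((ℓ / Nat.gcd ℓ q) ^ u₀)) ∧
      ∀ M : ℕ, 0 < M →
        ((ℓ * Nat.gcd k M ∣ q * M) ↔
          (ℓ / Nat.gcd ℓ q) * Nat.gcd k ((ℓ / Nat.gcd ℓ q) ^ u₀) ∣ M) := by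
  set d := Nat.gcd ℓ q with hd
  have hdpos : 0 < d := Nat.gcd_pos_of_pos_left _ hl
  set l1 := ℓ / d with hl1
  set q1 := q / d with hq1
  have hld : ℓ = d * l1 := (Nat.mul_div_cancel' (Nat.gcd_dvd_left _ _)).symm
  have hqd : q = d * q1 := (Nat.mul_div_cancel' (Nat.gcd_dvd_right _ _)).symm
  have hcop : Nat.Coprime l1 q1 := Nat.coprime_div_gcd_div_gcd hdpos
  obtain ⟨u₀, hu₀⟩ := gcd_pow_exists_stab k l1 hk
  refine ⟨u₀, gcd_pow_stable k l1 u₀ hk hu₀, ?_⟩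
  intro M hM
  set g := Nat.gcd k (l1 ^ u₀) with hg
  have hgpos : 0 < g := Nat.gcd_pos_of_pos_left _ hk
  have hgk : g ∣ k := Nat.gcd_dvd_left _ _
  have hcop' : Nat.Coprime (k / g) l1 := cofactor_coprime k l1 u₀ hk hu₀
  set c := Nat.gcd k M with hc
  have hcpos : 0 < c := Nat.gcd_pos_of_pos_left _ hk
  have hcM : c ∣ M := Nat.gcd_dvd_right _ _
  -- first reduction : ℓ * c ∣ q * M ↔ l1 * c ∣ M
  have step1 : (ℓ * c ∣ q * M) ↔ (l1 * c ∣ M) := by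
    constructor
    · intro h
      rw [hld, hqd, mul_assoc, mul_assoc] at h
      have h' : l1 * c ∣ q1 * M := (mul_dvd_mul_iff_left hdpos.ne').mp h
      obtain ⟨M', hM'⟩ := hcM
      rw [hM'] at h'
      have h'' : l1 * c ∣ q1 * M' * c := by
        have heq : q1 * (c * M') = q1 * M' * c := by ring
        rwa [heq] at h'
      have h3 : l1 ∣ q1 * M' := (Nat.mul_dvd_mul_iff_right hcpos).mp h''
      have h4 : l1 ∣ M' := hcop.dvd_of_dvd_mul_left h3
      rw [hM']
      obtain ⟨t, ht⟩ := h4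
      exact ⟨t, by rw [ht]; ring⟩
    · intro h
      rw [hld, hqd, mul_assoc, mul_assoc]
      exact mul_dvd_mul_left d (h.trans (dvd_mul_left M q1))
  rw [step1]
  constructor
  · -- forward: l1 * c ∣ M → l1 * g ∣ M
    intro h
    -- gcd k (l1 * c) = c
    have e1 : Nat.gcd k (l1 * c) = c := by
      apply Nat.dvd_antisymm
      · exact Nat.dvd_gcd (Nat.gcd_dvd_left _ _) ((Nat.gcd_dvd_right _ _).trans h)
      · exact Nat.dvd_gcd (Nat.gcd_dvd_left _ _) (dvd_mul_left c l1)
    -- k = c * k₁ with gcd k₁ l1 = 1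
    obtain ⟨k₁, hk₁⟩ := (Nat.gcd_dvd_left k M : c ∣ k)
    have e2 : Nat.gcd k₁ l1 = 1 := by
      have h5 : Nat.gcd (c * k₁) (c * l1) = c * Nat.gcd k₁ l1 := Nat.gcd_mul_left c k₁ l1
      rw [← hk₁, mul_comm c l1, e1] at h5
      have h6 : c * 1 = c * Nat.gcd k₁ l1 := by rw [mul_one]; exact h5
      exact (Nat.eq_of_mul_eq_mul_left hcpos h6).symm
    -- g ∣ c
    have e3 : g ∣ c := by
      have h1 : g ∣ Nat.gcd k (c * l1 ^ u₀) :=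
        Nat.dvd_gcd hgk ((Nat.gcd_dvd_right _ _).trans (dvd_mul_left _ c))
      have h2 : Nat.gcd k (c * l1 ^ u₀) = c := by
        rw [hk₁, Nat.gcd_mul_left]
        have : Nat.gcd k₁ (l1 ^ u₀) = 1 := (Nat.Coprime.pow_right u₀ e2)
        rw [this, mul_one]
      rw [h2] at h1; exact h1
    exact (mul_dvd_mul_left l1 e3).trans h
  · -- backward: l1 * g ∣ M → l1 * c ∣ M
    intro h
    obtain ⟨N, hN⟩ := h
    obtain ⟨k', hk'⟩ := hgk
    have hk'' : k' = k / g := by rw [hk', Nat.mul_div_cancel_left _ hgpos]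
    have hcopk' : Nat.Coprime k' l1 := hk'' ▸ hcop'
    -- c = g * gcd k' N
    have e4 : c = g * Nat.gcd k' N := by
      rw [hc, hN, hk']
      have : l1 * g * N = g * (l1 * N) := by ring
      rw [this, Nat.gcd_mul_left]
      congr 1
      exact Nat.Coprime.gcd_mul_left_cancel_right N hcopk'.symm
    rw [hN, e4]
    have : l1 * (g * Nat.gcd k' N) = (l1 * g) * Nat.gcd k' N := by ring
    rw [this]
    exact mul_dvd_mul_left _ ((Nat.gcd_dvd_right _ _))
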